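/- arXiv:1510.05382 — 3 statements merged into one kernel-verified Lean document; each statement's English description precedes it below -/
import Mathlib

section
/- Let p be an odd prime, K a field, and L/K a field extension with [L:K] = p. If ξ ∈ L is a root of unity whose order is a power of p, then ξ^p ∈ K. -/
set_option maxHeartbeats 1000000
open Module

private lemma aux_lte (p k : ℕ) (hp : p.Prime) (hodd : Odd p) (a : ℤ)
    (h : (p : ℤ) ^ k ∣ a ^ p - 1) : (p : ℤ) ^ (k - 1) ∣ a - 1 := by
  rcases Nat.eq_zero_or_pos k with rfl | hk
  · simpa using one_dvd _
  by_cases ha1 : a = 1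
  · simp [ha1]
  have hpd : (p : ℤ) ∣ a ^ p - 1 := (dvd_pow_self (p : ℤ) hk.ne').trans h
  have hpa1 : (p : ℤ) ∣ a - 1 := by
    have h2 : ((a - 1 : ℤ) : ZMod p) = 0 := by
      have h3 : ((a ^ p - 1 : ℤ) : ZMod p) = 0 := by
        exact_mod_cast (ZMod.intCast_zmod_eq_zero_iff_dvd _ _).mpr hpd
      push_cast at h3 ⊢
      have h4 : (a : ZMod p) ^ p = (a : ZMod p) := by
        haveI : Fact p.Prime := ⟨hp⟩
        exact ZMod.pow_card _
      rw [h4] at h3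
      linear_combination h3
    exact (ZMod.intCast_zmod_eq_zero_iff_dvd _ _).mp h2
  have hpa : ¬ (p : ℤ) ∣ a := by
    intro hd
    have h5 : (p : ℤ) ∣ 1 := by
      have : (p : ℤ) ∣ a ^ p := dvd_pow hd hp.ne_zero
      simpa using dvd_sub this hpd
    exact hp.one_lt.ne' (by exact_mod_cast Int.eq_one_of_dvd_one (by positivity) h5)
  have hfin : FiniteMultiplicity (p : ℤ) (a - 1) :=
    Int.finiteMultiplicity_iff.mpr ⟨by simpa using hp.ne_one, sub_ne_zero.mpr ha1⟩
  have hfinp : FiniteMultiplicity p p := Nat.finiteMultiplicity_iff.mpr ⟨hp.ne_one, hp.pos⟩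
  have hlte := Int.emultiplicity_pow_sub_pow hp hodd (x := a) (y := 1) (by simpa using hpa1)
    hpa p
  rw [one_pow, hfin.emultiplicity_eq_multiplicity, hfinp.emultiplicity_self] at hlte
  have hle : (k : ℕ∞) ≤ emultiplicity (p : ℤ) (a ^ p - 1) :=
    pow_dvd_iff_le_emultiplicity.mp h
  rw [hlte] at hle
  have hle2 : k ≤ multiplicity (p : ℤ) (a - 1) + 1 := by exact_mod_cast hle
  have hle3 : k - 1 ≤ multiplicity (p : ℤ) (a - 1) := by omega
  exact (pow_dvd_pow _ hle3).trans (pow_multiplicity_dvd _ _)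

/-- Let `p` be an odd prime, `K` a field, and `L/K` a field extension with `[L:K] = p`.
If `ξ ∈ L` is a root of unity whose order is a power of `p`, then `ξ^p ∈ K`. -/
theorem pow_p_mem_base_of_pPower_rootOfUnity
    (p : ℕ) (hp : p.Prime) (hodd : Odd p)
    (K L : Type*) [Field K] [Field L] [Algebra K L]
    (hdim : Module.finrank K L = p)
    (ξ : L) (n : ℕ) (hξ : ξ ^ p ^ n = 1) :
    ξ ^ p ∈ (algebraMap K L).range := by
  by_cases h1 : ξ = 1
  · exact ⟨1, by simp [h1]⟩
  by_cases hpL : (p : L) = 0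
  · -- characteristic p : then ξ = 1, contradiction with h1
    exfalso
    haveI : CharP L p := (CharP.charP_iff_prime_eq_zero hp).mpr hpL
    haveI : Fact p.Prime := ⟨hp⟩
    apply h1
    have h2 : (ξ - 1) ^ p ^ n = 0 := by
      rw [sub_pow_char_pow, hξ, one_pow, sub_self]
    have h3 : ξ - 1 = 0 := pow_eq_zero_iff (pow_ne_zero n hp.ne_zero) |>.mp h2
    exact sub_eq_zero.mp h3
  -- main case : characteristic away from p
  have hpK : (p : K) ≠ 0 := fun h => hpL (by rw [← map_natCast (algebraMap K L), h, map_zero])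
  haveI hfd : FiniteDimensional K L := .of_finrank_pos (hdim ▸ hp.pos)
  have hordfin : IsOfFinOrder ξ :=
    isOfFinOrder_iff_pow_eq_one.mpr ⟨p ^ n, pow_pos hp.pos n, hξ⟩
  set m := orderOf ξ with hm
  have hmdvd : m ∣ p ^ n := orderOf_dvd_of_pow_eq_one hξ
  obtain ⟨k, hkn, hmk⟩ := (Nat.dvd_prime_pow hp).mp hmdvd
  have hm0 : 0 < m := hordfin.orderOf_pos
  haveI : NeZero m := ⟨hm0.ne'⟩
  have hprim : IsPrimitiveRoot ξ m := IsPrimitiveRoot.orderOf ξ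
  have hk1 : 1 ≤ k := by
    rcases Nat.eq_zero_or_pos k with rfl | hk
    · exfalso; apply h1; rw [← pow_one ξ]
      have : m = 1 := by simpa using hmk
      rw [← this, hm]; exact pow_orderOf_eq_one ξ
    · exact hk
  haveI : NeZero ((m : ℕ) : K) := ⟨by
    rw [hmk]; push_cast; exact pow_ne_zero _ hpK⟩
  have hsimple := Subalgebra.isSimpleOrder_of_finrank_prime K L (hdim ▸ hp)
  rcases hsimple.eq_bot_or_eq_top (Algebra.adjoin K {ξ}) with hbot | htop
  · have hmem : ξ ∈ Algebra.adjoin K {ξ} := Algebra.self_mem_adjoin_singleton K ξ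
    rw [hbot] at hmem
    obtain ⟨x, hx⟩ := Algebra.mem_bot.mp hmem
    exact ⟨x ^ p, by rw [map_pow, hx]⟩
  · set M : ℕ+ := ⟨m, hm0⟩ with hM
    haveI hcyc : IsCyclotomicExtension {(M : ℕ)} K L := by
      refine (IsCyclotomicExtension.iff_adjoin_eq_top _ _ _).mpr ⟨?_, ?_⟩
      · rintro q hq -
        rw [Set.mem_singleton_iff] at hq
        subst hq
        exact ⟨ξ, hprim⟩
      · refine top_unique ?_
        rw [← htop]
        refine Algebra.adjoin_mono ?_
        rintro x hx
        rw [Set.mem_singleton_iff] at hx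
        subst hx
        exact ⟨M, rfl, hm0.ne', hprim.pow_eq_one⟩
    haveI : IsGalois K L := IsCyclotomicExtension.isGalois {(M : ℕ)} K L
    suffices hfix : ∀ σ : L ≃ₐ[K] L, σ (ξ ^ p) = ξ ^ p by
      have hb : ξ ^ p ∈ (⊥ : IntermediateField K L) := by
        rw [← IsGalois.fixedField_fixingSubgroup (⊥ : IntermediateField K L)]
        rintro ⟨σ, -⟩
        exact hfix σ
      rwa [IntermediateField.mem_bot] at hb
    intro σ
    obtain ⟨a, ha_lt, ha⟩ := hprim.eq_pow_of_pow_eq_one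
      (show (σ ξ) ^ m = 1 by rw [← map_pow, hprim.pow_eq_one, map_one])
    have ha0 : a ≠ 0 := by
      rintro rfl
      apply h1
      have : σ ξ = 1 := by simpa using ha.symm
      simpa using congrArg σ.symm this
    have hσp : σ ^ p = 1 := by
      apply orderOf_dvd_iff_pow_eq_one.mp
      have hcard := IsGalois.card_aut_eq_finrank K L
      have := orderOf_dvd_natCard (x := σ)
      rwa [hcard, hdim] at this
    have hiter : ∀ j : ℕ, (σ ^ j) ξ = ξ ^ (a ^ j) := by
      intro j
      induction j with
      | zero => simp
      | succ j ih =>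
        rw [pow_succ', pow_succ]
        calc (σ * σ ^ j) ξ = σ ((σ ^ j) ξ) := rfl
          _ = σ (ξ ^ a ^ j) := by rw [ih]
          _ = (σ ξ) ^ a ^ j := by rw [map_pow]
          _ = (ξ ^ a) ^ a ^ j := by rw [ha]
          _ = ξ ^ (a ^ j * a) := by rw [← pow_mul, mul_comm]
    have hfixp : ξ ^ (a ^ p) = ξ := by
      have := hiter p
      rw [hσp] at this
      simpa using this.symm
    have hxi0 : ξ ≠ 0 := fun h => one_ne_zero (α := L) (by rw [← hξ, h, zero_pow (pow_ne_zero n hp.ne_zero)])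
    have ha1le : 1 ≤ a := Nat.one_le_iff_ne_zero.mpr ha0
    have hap1 : 1 ≤ a ^ p := Nat.one_le_iff_ne_zero.mpr (pow_ne_zero p ha0)
    have hdvdm : m ∣ a ^ p - 1 := by
      apply orderOf_dvd_of_pow_eq_one
      have h8 : ξ ^ (a ^ p - 1 + 1) = ξ := by rw [Nat.sub_add_cancel hap1]; exact hfixp
      rw [pow_succ] at h8
      have h9 : ξ ^ (a ^ p - 1) * ξ = 1 * ξ := by rw [one_mul]; exact h8
      exact mul_right_cancel₀ hxi0 h9
    have hdvdZ : (p : ℤ) ^ k ∣ (a : ℤ) ^ p - 1 := by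
      have h6 : ((p ^ k : ℕ) : ℤ) ∣ ((a ^ p - 1 : ℕ) : ℤ) :=
        Int.natCast_dvd_natCast.mpr (hmk ▸ hdvdm)
      rwa [Nat.cast_sub hap1, Nat.cast_pow, Nat.cast_pow, Nat.cast_one] at h6
    have hkey := aux_lte p k hp hodd (a : ℤ) hdvdZ
    have hkeyN : p ^ (k - 1) ∣ a - 1 := by
      have : ((p ^ (k - 1) : ℕ) : ℤ) ∣ ((a - 1 : ℕ) : ℤ) := by
        rwa [Nat.cast_sub ha1le, Nat.cast_pow, Nat.cast_one]
      exact_mod_cast this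
    have hdvd2 : m ∣ a * p - p := by
      rw [hmk]
      have h10 : a * p - p = (a - 1) * p := by
        rw [Nat.sub_mul, one_mul]
      rw [h10]
      calc p ^ k = p ^ (k - 1) * p := by rw [← pow_succ]; congr 1; omega
        _ ∣ (a - 1) * p := Nat.mul_dvd_mul_right hkeyN p
    have hfin2 : ξ ^ (a * p - p) = 1 := orderOf_dvd_iff_pow_eq_one.mp hdvd2
    have hple : p ≤ a * p := Nat.le_mul_of_pos_left p (by omega)
    calc σ (ξ ^ p) = (σ ξ) ^ p := by rw [map_pow]
      _ = ξ ^ (a * p) := by rw [← ha, ← pow_mul]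
      _ = ξ ^ (a * p - p) * ξ ^ p := by rw [← pow_add]; congr 1; omega
      _ = ξ ^ p := by rw [hfin2, one_mul]
end

section
/- Let p be an odd prime, let L/K be a Galois extension of number fields with G = Gal(L/K) cyclic of order p generated by s, and let ζ ∈ L be a root of unity of order p^{n+1} with n ≥ 1 such that ζ ∉ K and ζ generates μ_{p^∞}(L). Then ζ·s(ζ)^{-1} is a root of unity of order exactly p lying in K, and the set {η·s(η)^{-1} : η ∈ μ_{p^∞}(L)} equals the group μ_p(K) of p-th roots of unity of K. -/
private lemma aux_binom (c : ℤ) : ∀ i : ℕ, c ^ 2 ∣ (1 + c) ^ i - 1 - i * c := by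
  intro i
  induction i with
  | zero => simp
  | succ i ih =>
    have key : (1 + c) ^ (i + 1) - 1 - (↑(i + 1)) * c
        = (1 + c) * ((1 + c) ^ i - 1 - i * c) + i * c ^ 2 := by
      push_cast; ring
    rw [key]
    exact dvd_add (ih.mul_left _) (dvd_mul_left _ _)

private lemma aux_sum (p : ℕ) (_hp : p.Prime) (hodd : Odd p) (c : ℤ) (hpc : (p : ℤ) ∣ c) :
    (c * p) ∣ (∑ i ∈ Finset.range p, (1 + c) ^ i) - p := by
  obtain ⟨w, hw⟩ := hodd
  have hT : (∑ i ∈ Finset.range p, i) = p * w := by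
    have h2 : (∑ i ∈ Finset.range p, i) * 2 = p * (p - 1) := Finset.sum_range_id_mul_two p
    have hp1 : p - 1 = 2 * w := by omega
    rw [hp1] at h2
    have h3 : p * (2 * w) = (p * w) * 2 := by ring
    rw [h3] at h2
    omega
  have h1 : ∑ i ∈ Finset.range p, ((1 + c) ^ i - 1 - (i : ℤ) * c)
      = (∑ i ∈ Finset.range p, (1 + c) ^ i) - p - (∑ i ∈ Finset.range p, (i : ℤ)) * c := by
    rw [Finset.sum_sub_distrib, Finset.sum_sub_distrib, Finset.sum_const, Finset.card_range,
      ← Finset.sum_mul]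
    simp
  have h2 : (∑ i ∈ Finset.range p, (i : ℤ)) = (p : ℤ) * w := by
    have := congrArg (Nat.cast : ℕ → ℤ) hT
    push_cast at this
    exact_mod_cast this
  have hd1 : (c * p) ∣ ∑ i ∈ Finset.range p, ((1 + c) ^ i - 1 - (i : ℤ) * c) := by
    refine Finset.dvd_sum fun i _ => dvd_trans ?_ (aux_binom c i)
    rw [sq]
    exact mul_dvd_mul_left c hpc
  have hd2 : (c * p) ∣ (∑ i ∈ Finset.range p, (i : ℤ)) * c := by
    rw [h2]
    exact Dvd.intro w (by ring)
  have := dvd_add hd1 hd2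
  rw [h1] at this
  convert this using 1
  · rfl
  · ring

private lemma aux_pow_dvd (p n : ℕ) (hp : p.Prime) (hodd : Odd p) (a : ℤ)
    (h : (p : ℤ) ^ (n + 1) ∣ a ^ p - 1) : (p : ℤ) ^ n ∣ a - 1 := by
  haveI : Fact p.Prime := ⟨hp⟩
  have hpprime : Prime (p : ℤ) := Nat.prime_iff_prime_int.mp hp
  have h1 : (p : ℤ) ∣ a ^ p - 1 :=
    dvd_trans (dvd_pow_self _ (Nat.succ_ne_zero n)) h
  have hpc : (p : ℤ) ∣ a - 1 := by
    have h2 : ((a ^ p - 1 : ℤ) : ZMod p) = 0 := (ZMod.intCast_zmod_eq_zero_iff_dvd _ p).mpr h1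
    push_cast at h2
    rw [ZMod.pow_card] at h2
    have h3 : ((a - 1 : ℤ) : ZMod p) = 0 := by push_cast; exact h2
    exact (ZMod.intCast_zmod_eq_zero_iff_dvd _ p).mp h3
  have hgeom : (∑ i ∈ Finset.range p, a ^ i) * (a - 1) = a ^ p - 1 := geom_sum_mul a p
  have haux : (a - 1) * p ∣ (∑ i ∈ Finset.range p, a ^ i) - p := by
    have := aux_sum p hp hodd (a - 1) hpc
    simpa using this
  obtain ⟨u, hu⟩ := haux
  have hS : (∑ i ∈ Finset.range p, a ^ i) = p * (1 + (a - 1) * u) := by linarith [hu]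
  have hkey : (p : ℤ) ^ (n + 1) ∣ ((p : ℤ) * (a - 1)) * (1 + (a - 1) * u) := by
    rw [← hgeom] at h
    rw [hS] at h
    convert h using 1
    ring
  have hnd : ¬ (p : ℤ) ∣ (1 + (a - 1) * u) := by
    intro hd
    have h4 : (p : ℤ) ∣ (1 + (a - 1) * u) - (a - 1) * u := dvd_sub hd (hpc.mul_right u)
    simp only [add_sub_cancel_right] at h4
    exact hpprime.not_dvd_one h4
  have hcop : IsCoprime ((p : ℤ) ^ (n + 1)) (1 + (a - 1) * u) :=
    ((hpprime.coprime_iff_not_dvd).mpr hnd).pow_left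
  have hfin : (p : ℤ) ^ (n + 1) ∣ (p : ℤ) * (a - 1) := hcop.dvd_of_dvd_mul_right hkey
  have hps : (p : ℤ) ^ (n + 1) = (p : ℤ) * (p : ℤ) ^ n := by ring
  rw [hps] at hfin
  exact (mul_dvd_mul_iff_left (by exact_mod_cast hp.ne_zero : (p : ℤ) ≠ 0)).mp hfin

/-- Let `p` be an odd prime, `L/K` Galois of number fields with Galois group cyclic of order
`p` generated by `s`, and `ζ ∈ L` a root of unity of order `p^(n+1)`, `n ≥ 1`, with `ζ ∉ K`,
generating `μ_{p^∞}(L)`.  Then `ζ·s(ζ)⁻¹` is a root of unity of order exactly `p` lying in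
`K`, and `{η·s(η)⁻¹ : η ∈ μ_{p^∞}(L)}` equals the group `μ_p(K)` of `p`-th roots of unity
of `K` (viewed inside `L`). -/
theorem crossedHomomorphism_image_eq_muP
    (p : ℕ) (hp : p.Prime) (hodd : Odd p)
    (K L : Type*) [Field K] [NumberField K] [Field L] [NumberField L] [Algebra K L]
    [IsGalois K L] (hdim : Module.finrank K L = p)
    (s : L ≃ₐ[K] L) (hs : ∀ g : L ≃ₐ[K] L, g ∈ Subgroup.zpowers s)
    (ζ : L) (n : ℕ) (hn : 1 ≤ n) (hord : orderOf ζ = p ^ (n + 1))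
    (hζK : ζ ∉ (algebraMap K L).range)
    (hgen : ∀ x : L, (∃ m : ℕ, x ^ p ^ m = 1) → ∃ k : ℕ, x = ζ ^ k) :
    (orderOf (ζ * (s ζ)⁻¹) = p ∧ ζ * (s ζ)⁻¹ ∈ (algebraMap K L).range) ∧
      (fun η : L => η * (s η)⁻¹) '' {x : L | ∃ m : ℕ, x ^ p ^ m = 1} =
        {z : L | z ^ p = 1 ∧ z ∈ (algebraMap K L).range} := by
  haveI : Fact p.Prime := ⟨hp⟩
  have hp1 : 1 < p := hp.one_lt
  have hq1 : 1 < p ^ (n + 1) := Nat.one_lt_pow (Nat.succ_ne_zero n) hp1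
  have hζpow : ζ ^ p ^ (n + 1) = 1 := by rw [← hord]; exact pow_orderOf_eq_one ζ
  have hζ0 : ζ ≠ 0 := by
    intro h
    rw [h, zero_pow (by positivity)] at hζpow
    exact one_ne_zero hζpow.symm
  -- elements fixed by `s` lie in `K`
  have hfix : ∀ x : L, s x = x → x ∈ (algebraMap K L).range := by
    intro x hx
    have hsmem : s ∈ MulAction.stabilizer (L ≃ₐ[K] L) x := by
      simpa [MulAction.mem_stabilizer_iff, AlgEquiv.smul_def] using hx
    have hstab : Subgroup.zpowers s ≤ MulAction.stabilizer (L ≃ₐ[K] L) x :=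
      Subgroup.zpowers_le.mpr hsmem
    have h1 : x ∈ IntermediateField.fixedField (⊤ : Subgroup (L ≃ₐ[K] L)) := by
      intro g
      exact hstab (hs g.1)
    rw [← IntermediateField.fixingSubgroup_bot,
      IsGalois.fixedField_fixingSubgroup (⊥ : IntermediateField K L)] at h1
    obtain ⟨y, hy⟩ := IntermediateField.mem_bot.mp h1
    exact ⟨y, hy⟩
  -- power-comparison via units
  obtain ⟨zu, hzu⟩ : IsUnit ζ := isUnit_iff_ne_zero.mpr hζ0
  have hordu : orderOf zu = p ^ (n + 1) := by rw [← orderOf_units, hzu, hord]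
  have hpowiff : ∀ i j : ℕ, (ζ ^ i = ζ ^ j ↔ i ≡ j [MOD p ^ (n + 1)]) := by
    intro i j
    rw [← hzu, ← Units.val_pow_eq_pow_val, ← Units.val_pow_eq_pow_val, ← Units.ext_iff,
      pow_eq_pow_iff_modEq, hordu]
  -- s ζ = ζ ^ a
  obtain ⟨a, ha⟩ := hgen (s ζ) ⟨n + 1, by rw [← map_pow, hζpow, map_one]⟩
  have ha1 : 1 ≤ a := by
    by_contra h
    have ha0 : a = 0 := by omega
    rw [ha0, pow_zero] at ha
    have hζ1 : ζ = 1 := by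
      have := congrArg s.symm ha
      simpa using this
    have h2 : orderOf ζ = 1 := by rw [hζ1]; exact orderOf_one
    rw [hord] at h2
    omega
  -- s ^ p = 1  and the congruence a ^ p ≡ 1
  have hcard : Fintype.card (L ≃ₐ[K] L) = p := by
    rw [← Nat.card_eq_fintype_card, IsGalois.card_aut_eq_finrank, hdim]
  have hsp : s ^ p = 1 := by rw [← hcard]; exact pow_card_eq_one
  have hpowk : ∀ k : ℕ, (s ^ k) ζ = ζ ^ a ^ k := by
    intro k
    induction k with
    | zero => simp
    | succ k ih =>
      rw [pow_succ, AlgEquiv.mul_apply, ha, map_pow, ih, ← pow_mul, ← pow_succ]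
  have hmodp : a ^ p ≡ 1 [MOD p ^ (n + 1)] := by
    have h1 : ζ ^ a ^ p = ζ ^ 1 := by
      rw [← hpowk p, hsp, pow_one]
      rfl
    exact (hpowiff _ _).mp h1
  have hintdvd : (p : ℤ) ^ (n + 1) ∣ (a : ℤ) ^ p - 1 := by
    have h1 := (Nat.modEq_iff_dvd (n := p ^ (n + 1))).mp hmodp.symm
    push_cast at h1
    exact_mod_cast h1
  have hmZ : (p : ℤ) ^ n ∣ (a : ℤ) - 1 := aux_pow_dvd p n hp hodd a hintdvd
  set m : ℕ := a - 1 with hm_def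
  have ham : a = m + 1 := by omega
  have hmnat : p ^ n ∣ m := by
    have hc : ((m : ℕ) : ℤ) = (a : ℤ) - 1 := by omega
    rw [← hc] at hmZ
    exact_mod_cast hmZ
  have hmne : ¬ p ^ (n + 1) ∣ m := by
    intro hdvd
    have h1 : a ≡ 1 [MOD p ^ (n + 1)] := ((Nat.modEq_iff_dvd' ha1).mpr hdvd).symm
    have h2 : ζ ^ a = ζ ^ 1 := (hpowiff _ _).mpr h1
    rw [pow_one] at h2
    exact hζK (hfix ζ (by rw [ha, h2]))
  have hm0 : m ≠ 0 := by
    intro h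
    exact hmne (h ▸ dvd_zero _)
  -- the key exponent
  set e : ℕ := m * (p - 1) with he_def
  have he0 : e ≠ 0 := by
    have : p - 1 ≠ 0 := by omega
    positivity
  have hem : p ^ n ∣ e := hmnat.mul_right _
  have hene : ¬ p ^ (n + 1) ∣ e := by
    intro hdvd
    have hcop : Nat.Coprime (p ^ (n + 1)) (p - 1) := by
      have h1 : Nat.Coprime p (p - 1) :=
        (Nat.Prime.coprime_iff_not_dvd hp).mpr
          (Nat.not_dvd_of_pos_of_lt (by omega) (by omega))
      exact h1.pow_left _
    exact hmne (hcop.dvd_of_dvd_mul_right hdvd)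
  have hgcd : Nat.gcd (p ^ (n + 1)) e = p ^ n := by
    have hd1 : p ^ n ∣ Nat.gcd (p ^ (n + 1)) e :=
      Nat.dvd_gcd (pow_dvd_pow p (by omega)) hem
    obtain ⟨k, hk, hke⟩ := (Nat.dvd_prime_pow hp).mp (Nat.gcd_dvd_left (p ^ (n + 1)) e)
    have hkn : n ≤ k := by
      by_contra h
      have h1 : p ^ n ∣ p ^ k := hke ▸ hd1
      have := (Nat.pow_dvd_pow_iff_le_right hp1).mp h1
      omega
    have hkne : k ≠ n + 1 := by
      intro h
      apply hene
      have h1 : p ^ (n + 1) ∣ Nat.gcd (p ^ (n + 1)) e := by rw [hke, h]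
      exact h1.trans (Nat.gcd_dvd_right _ _)
    have : k = n := by omega
    rw [hke, this]
  -- ζ * (s ζ)⁻¹ = ζ ^ e
  have hmp : (ζ ^ m) ^ p = 1 := by
    rw [← pow_mul]
    have hdvd : orderOf ζ ∣ m * p := by
      rw [hord, pow_succ]
      exact Nat.mul_dvd_mul_right hmnat p
    exact orderOf_dvd_iff_pow_eq_one.mp hdvd
  have hxval : ζ * (s ζ)⁻¹ = ζ ^ e := by
    have h1 : s ζ = ζ ^ m * ζ := by rw [ha, ham, pow_succ]
    have h2 : (ζ ^ m)⁻¹ = (ζ ^ m) ^ (p - 1) := by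
      apply inv_eq_of_mul_eq_one_right
      rw [← pow_succ']
      have h3 : p - 1 + 1 = p := by omega
      rw [h3, hmp]
    rw [h1, mul_inv_rev, ← mul_assoc, mul_inv_cancel₀ hζ0, one_mul, h2, ← pow_mul]
  -- the order
  have hordx : orderOf (ζ * (s ζ)⁻¹) = p := by
    rw [hxval, orderOf_pow' ζ he0, hord, hgcd, pow_succ]
    exact Nat.mul_div_cancel_left p (pow_pos hp.pos n)
  -- membership in K
  have hxK : ζ * (s ζ)⁻¹ ∈ (algebraMap K L).range := by
    apply hfix
    rw [hxval, map_pow, ha, ← pow_mul]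
    apply (hpowiff _ _).mpr
    have hle : e ≤ a * e := Nat.le_mul_of_pos_left e (by omega)
    have hdv : p ^ (n + 1) ∣ a * e - e := by
      have hsub : a * e - e = m * m * (p - 1) := by
        rw [ham, add_mul, one_mul, Nat.add_sub_cancel, he_def]
        ring
      rw [hsub]
      calc p ^ (n + 1) ∣ p ^ n * p ^ n := by
            rw [← pow_add]; exact pow_dvd_pow p (by omega)
        _ ∣ m * m := mul_dvd_mul hmnat hmnat
        _ ∣ m * m * (p - 1) := dvd_mul_right _ _
    exact ((Nat.modEq_iff_dvd' hle).mpr hdv).symm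
  have hxp : (ζ * (s ζ)⁻¹) ^ p = 1 := by rw [← hordx]; exact pow_orderOf_eq_one _
  refine ⟨⟨hordx, hxK⟩, ?_⟩
  -- the image identity
  have hval : ∀ k : ℕ, (ζ ^ k) * (s (ζ ^ k))⁻¹ = (ζ * (s ζ)⁻¹) ^ k := by
    intro k
    rw [map_pow, ← inv_pow, mul_pow]
  ext z
  simp only [Set.mem_image, Set.mem_setOf_eq]
  constructor
  · rintro ⟨η, ⟨mm, hmm⟩, rfl⟩
    obtain ⟨k, rfl⟩ := hgen η ⟨mm, hmm⟩
    rw [hval k]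
    constructor
    · rw [pow_right_comm, hxp, one_pow]
    · obtain ⟨u, hu⟩ := hxK
      exact ⟨u ^ k, by rw [map_pow, hu]⟩
  · rintro ⟨hz, -⟩
    obtain ⟨k, rfl⟩ := hgen z ⟨1, by rwa [pow_one]⟩
    -- p ^ n ∣ k
    have hkd : p ^ n ∣ k := by
      have h1 : orderOf ζ ∣ k * p := orderOf_dvd_of_pow_eq_one (by rwa [pow_mul])
      rw [hord, pow_succ] at h1
      exact (Nat.mul_dvd_mul_iff_right hp.pos).mp h1
    obtain ⟨j, rfl⟩ := hkd
    -- write ζ * (s ζ)⁻¹ = ζ ^ (p ^ n * b) with ¬ p ∣ b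
    obtain ⟨b, hb⟩ : p ^ n ∣ e := hem
    have hbp : ¬ p ∣ b := by
      intro hpb
      apply hene
      obtain ⟨t, rfl⟩ := hpb
      rw [hb, pow_succ]
      exact ⟨t, by ring⟩
    obtain ⟨d, -, hd⟩ := Nat.exists_mul_mod_eq_one_of_coprime
      ((Nat.Prime.coprime_iff_not_dvd hp).mpr hbp).symm hp1
    refine ⟨ζ ^ (d * j), ⟨n + 1, by rw [pow_right_comm, hζpow, one_pow]⟩, ?_⟩
    rw [hval, hxval, ← pow_mul, hb]
    apply (hpowiff _ _).mpr
    have h1 : b * d ≡ 1 [MOD p] := by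
      unfold Nat.ModEq
      rw [hd, Nat.mod_eq_of_lt hp1]
    have h2 : b * (d * j) ≡ j [MOD p] := by
      have := h1.mul_right j
      rwa [one_mul, mul_assoc] at this
    have h3 : p ^ n * (b * (d * j)) ≡ p ^ n * j [MOD p ^ n * p] := h2.mul_left' (p ^ n)
    rw [← pow_succ] at h3
    calc (p ^ n * b) * (d * j) = p ^ n * (b * (d * j)) := by ring
      _ ≡ p ^ n * j [MOD p ^ (n + 1)] := h3
end

section
/- Let p be an odd prime and let L/K be a Galois extension of number fields with G = Gal(L/K) cyclic of order p generated by s. Suppose there exists ζ ∈ μ_{p^∞}(L) with ζ ∉ K which generates μ_{p^∞}(L) (equivalently μ_{p^∞}(K) = μ_{p^∞}(L)^p ≠ 1). Then every ξ ∈ μ_{p^∞}(L) with N_{L/K}(ξ) = 1 can be written ξ = η·s(η)^{-1} for some η ∈ μ_{p^∞}(L); that is, H^1(G, μ_{p^∞}(L)) = 0. -/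
open Finset

lemma arith_key (p : ℕ) (hp : p.Prime) (hodd : Odd p) (n : ℕ) (a k : ℤ)
    (h1 : (p:ℤ)^n ∣ a^p - 1) (h2 : ¬ (p:ℤ)^n ∣ a - 1)
    (h3 : (p:ℤ)^n ∣ k * ∑ i ∈ range p, a^i) :
    ∃ j : ℤ, (p:ℤ)^n ∣ k + j*(a-1) := by
  haveI : Fact p.Prime := ⟨hp⟩
  have hpI : Prime (p:ℤ) := Nat.prime_iff_prime_int.1 hp
  have hn : 1 ≤ n := by
    by_contra h
    interval_cases n
    · exact h2 (by simp)
  -- p ∣ a - 1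
  have hpd : (p:ℤ) ∣ a - 1 := by
    have h1' : (p:ℤ) ∣ a^p - 1 := dvd_trans (dvd_pow_self _ (by omega)) h1
    have : ((a : ZMod p))^p = 1 := by
      have := (ZMod.intCast_zmod_eq_zero_iff_dvd (a^p - 1) p).2 h1'
      push_cast at this
      linear_combination this
    have ha1 : (a : ZMod p) = 1 := by
      rw [ZMod.pow_card] at this; exact this
    have : ((a - 1 : ℤ) : ZMod p) = 0 := by push_cast [ha1]; ring
    exact (ZMod.intCast_zmod_eq_zero_iff_dvd _ p).1 this
  set d : ℤ := a - 1 with hd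
  set T : ℤ := ∑ i ∈ range p, a^i with hT
  have hdT : T * d = a^p - 1 := geom_sum_mul a p
  set S : ℤ := ∑ i ∈ range p, ∑ j ∈ range i, a^j with hS
  have hTS : T = p + S * d := by
    have hgs : ∀ i, a ^ i = 1 + (∑ j ∈ range i, a^j) * d := by
      intro i
      have := geom_sum_mul a i
      rw [hd]; linarith [this]
    rw [hT, Finset.sum_congr rfl (fun i _ => hgs i), Finset.sum_add_distrib,
      Finset.sum_const, card_range, ← Finset.sum_mul]
    ring
  -- p ∣ S
  have hpS : (p:ℤ) ∣ S := by
    have ha1 : (a : ZMod p) = 1 := by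
      have h0 : ((a - 1 : ℤ) : ZMod p) = 0 := (ZMod.intCast_zmod_eq_zero_iff_dvd _ p).2 hpd
      rw [Int.cast_sub, Int.cast_one, sub_eq_zero] at h0
      exact h0
    rw [← ZMod.intCast_zmod_eq_zero_iff_dvd, hS]
    push_cast [ha1, one_pow]
    simp only [Finset.sum_const, card_range, nsmul_eq_mul, mul_one]
    have hcast : (∑ i ∈ range p, (i : ZMod p)) = ((∑ i ∈ range p, i : ℕ) : ZMod p) := by
      push_cast; ring
    rw [hcast, Finset.sum_range_id]
    have h2d : 2 ∣ p - 1 := by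
      obtain ⟨t, ht⟩ := hodd; omega
    rw [Nat.mul_div_assoc p h2d]
    push_cast
    simp [ZMod.natCast_self]
  obtain ⟨d₁, hd₁⟩ := hpd
  set w : ℤ := 1 + d₁ * S with hw
  have hTw : T = p * w := by rw [hTS, hw, hd₁]; ring
  have hpw : ¬ (p:ℤ) ∣ w := by
    intro hdvd
    have hds : (p:ℤ) ∣ d₁ * S := Dvd.dvd.mul_left hpS d₁
    have : (p:ℤ) ∣ 1 := by simpa [hw] using dvd_sub hdvd hds
    have := Int.le_of_dvd one_pos this
    have := hp.one_lt
    omega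
  -- maximal power of p dividing d
  have hd0 : d ≠ 0 := fun h => h2 (by simp [h])
  have hex : ∃ m : ℕ, ¬ (p:ℤ)^(m+1) ∣ d := by
    refine ⟨n - 1, ?_⟩
    rwa [Nat.sub_add_cancel hn]
  set f := Nat.find hex with hf
  have hf1 : ¬ (p:ℤ)^(f+1) ∣ d := Nat.find_spec hex
  have hfd : (p:ℤ)^f ∣ d := by
    rcases Nat.eq_zero_or_pos f with h0 | h0
    · simp [h0]
    · have := Nat.find_min hex (show f - 1 < f by omega)
      push_neg at this
      rwa [Nat.sub_add_cancel h0] at this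
  obtain ⟨u, hu⟩ := hfd
  have hpu : ¬ (p:ℤ) ∣ u := by
    rintro ⟨u', rfl⟩
    exact hf1 ⟨u', by rw [hu]; ring⟩
  -- f = n - 1
  have hfn : f + 1 ≤ n := by
    by_contra hc
    have : (p:ℤ)^n ∣ (p:ℤ)^f := pow_dvd_pow _ (by omega)
    exact h2 (this.trans ⟨u, hu⟩)
  have hnf : n ≤ f + 1 := by
    by_contra hc
    have hdvd : (p:ℤ)^(f+2) ∣ a^p - 1 := (pow_dvd_pow _ (by omega)).trans h1
    rw [← hdT, hTw, hu] at hdvd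
    have hne : (p:ℤ)^(f+1) ≠ 0 := pow_ne_zero _ (by exact_mod_cast hp.ne_zero)
    have : (p:ℤ) ∣ w * u := by
      have h' : (p:ℤ)^(f+1) * (p:ℤ) ∣ (p:ℤ)^(f+1) * (w * u) := by
        calc (p:ℤ)^(f+1) * (p:ℤ) = (p:ℤ)^(f+2) := by ring
        _ ∣ p * w * (p ^ f * u) := hdvd
        _ = (p:ℤ)^(f+1) * (w * u) := by ring
      exact (mul_dvd_mul_iff_left hne).1 h'
    rcases hpI.dvd_mul.1 this with h | h
    · exact hpw h
    · exact hpu h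
  have hfeq : f = n - 1 := by omega
  -- p^(n-1) ∣ k
  have hne : (p:ℤ) ≠ 0 := by exact_mod_cast hp.ne_zero
  have hkw : (p:ℤ)^(n-1) ∣ k * w := by
    have h' : (p:ℤ) * (p:ℤ)^(n-1) ∣ (p:ℤ) * (k * w) := by
      calc (p:ℤ) * (p:ℤ)^(n-1) = (p:ℤ)^(n-1+1) := (pow_succ' _ _).symm
        _ = (p:ℤ)^n := by rw [Nat.sub_add_cancel hn]
        _ ∣ k * T := h3
        _ = (p:ℤ) * (k * w) := by rw [hTw]; ring
    exact (mul_dvd_mul_iff_left hne).1 h'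
  have hkdvd : (p:ℤ)^(n-1) ∣ k :=
    ((hpI.coprime_iff_not_dvd.2 hpw).pow_left).dvd_of_dvd_mul_right hkw
  obtain ⟨k₁, hk₁⟩ := hkdvd
  obtain ⟨x, y, hxy⟩ := hpI.coprime_iff_not_dvd.2 hpu
  refine ⟨-(k₁ * y), ⟨k₁ * x, ?_⟩⟩
  have heq : k + -(k₁*y) * d = (p:ℤ)^(n-1) * (p:ℤ) * (k₁ * x) := by
    rw [hk₁, hu, hfeq]
    linear_combination (-((p:ℤ)^(n-1) * k₁)) * hxy
  rw [heq]
  rw [show (p:ℤ)^n = (p:ℤ)^(n-1) * p by rw [← pow_succ, Nat.sub_add_cancel hn]]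


lemma pow_eq_pow_of_modEq' {M : Type*} [Monoid M] (ζ : M) {x y : ℕ}
    (h : x ≡ y [MOD orderOf ζ]) : ζ ^ x = ζ ^ y := by
  rw [← pow_mod_orderOf ζ x, ← pow_mod_orderOf ζ y, h]

lemma modEq_of_pow_eq_pow' {F : Type*} [Field F] (ζ : F) (hζ0 : ζ ≠ 0) {x y : ℕ}
    (hxy : y ≤ x) (h : ζ ^ x = ζ ^ y) : x ≡ y [MOD orderOf ζ] := by
  have h1 : ζ ^ y * ζ ^ (x - y) = ζ ^ y * 1 := by
    rw [mul_one, ← pow_add, Nat.add_sub_cancel' hxy, h]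
  have h2 : ζ ^ (x - y) = 1 := mul_left_cancel₀ (pow_ne_zero y hζ0) h1
  exact ((Nat.modEq_iff_dvd' hxy).2 (orderOf_dvd_of_pow_eq_one h2)).symm

set_option maxHeartbeats 1000000 in
/-- Let `p` be an odd prime and `L/K` Galois of number fields with Galois group cyclic of
order `p` generated by `s`.  Suppose there exists `ζ ∈ μ_{p^∞}(L)` with `ζ ∉ K` which
generates `μ_{p^∞}(L)`.  Then every `ξ ∈ μ_{p^∞}(L)` with `N_{L/K}(ξ) = 1` can be written
`ξ = η·s(η)⁻¹` with `η ∈ μ_{p^∞}(L)`; that is, `H¹(G, μ_{p^∞}(L)) = 0`. -/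
theorem h1_muPInfinity_trivial_of_globally_cyclotomic
    (p : ℕ) (hp : p.Prime) (hodd : Odd p)
    (K L : Type*) [Field K] [NumberField K] [Field L] [NumberField L] [Algebra K L]
    [IsGalois K L] (hdim : Module.finrank K L = p)
    (s : L ≃ₐ[K] L) (hs : ∀ g : L ≃ₐ[K] L, g ∈ Subgroup.zpowers s)
    (ζ : L) (hζ : ∃ m : ℕ, ζ ^ p ^ m = 1)
    (hζK : ζ ∉ (algebraMap K L).range)
    (hgen : ∀ x : L, (∃ m : ℕ, x ^ p ^ m = 1) → ∃ k : ℕ, x = ζ ^ k) :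
    ∀ ξ : L, (∃ m : ℕ, ξ ^ p ^ m = 1) → Algebra.norm K ξ = 1 →
      ∃ η : L, (∃ m : ℕ, η ^ p ^ m = 1) ∧ ξ = η * (s η)⁻¹ := by
  intro ξ hξ hnorm
  have hcard : Fintype.card (L ≃ₐ[K] L) = p := (Nat.card_eq_fintype_card.symm.trans (IsGalois.card_aut_eq_finrank K L)).trans hdim
  have hsord : orderOf s = p := by
    have hdvd : orderOf s ∣ p := hcard ▸ orderOf_dvd_card
    rcases hp.eq_one_or_self_of_dvd _ hdvd with h | h
    · exfalso
      have hs1 : s = 1 := orderOf_eq_one_iff.1 h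
      have hall : ∀ g : L ≃ₐ[K] L, g = 1 := by
        intro g
        obtain ⟨z, hz⟩ := hs g
        simp only [hs1, one_zpow] at hz
        exact hz.symm
      have : Fintype.card (L ≃ₐ[K] L) ≤ 1 :=
        Fintype.card_le_one_iff.2 fun a b => (hall a).trans (hall b).symm
      have := hp.two_le
      omega
    · exact h
  -- ζ basic facts
  obtain ⟨m, hm⟩ := hζ
  have hζ0 : ζ ≠ 0 := by
    intro h
    rw [h, zero_pow (pow_ne_zero m hp.ne_zero)] at hm
    exact zero_ne_one hm
  obtain ⟨n, hnle, hN⟩ := (Nat.dvd_prime_pow hp).1 (orderOf_dvd_of_pow_eq_one hm)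
  -- action exponent a
  obtain ⟨a, ha⟩ := hgen (s ζ) ⟨m, by rw [← map_pow, hm, map_one]⟩
  have ha1 : 1 ≤ a := by
    rcases Nat.eq_zero_or_pos a with h0 | h0
    · exfalso
      rw [h0, pow_zero] at ha
      have hζ1 : ζ = 1 := by
        have := congrArg s.symm ha
        rwa [AlgEquiv.symm_apply_apply, map_one] at this
      exact hζK ⟨1, by rw [map_one, hζ1]⟩
    · exact h0
  have hiter : ∀ i : ℕ, (s ^ i) ζ = ζ ^ (a ^ i) := by
    intro i
    induction i with
    | zero => simp
    | succ i ih =>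
      rw [pow_succ', AlgEquiv.mul_apply, ih, map_pow, ha, ← pow_mul, ← pow_succ']
  have hsp : s ^ p = 1 := by rw [← hcard]; exact pow_card_eq_one
  have hmod1 : a ^ p ≡ 1 [MOD p ^ n] := by
    rw [← hN]
    refine modEq_of_pow_eq_pow' ζ hζ0 (Nat.one_le_pow _ _ ha1) ?_
    rw [pow_one, ← hiter, hsp, AlgEquiv.one_apply]
  have hmodne : ¬ a ≡ 1 [MOD p ^ n] := by
    intro h
    rw [← hN] at h
    have hfix : s ζ = ζ := by
      rw [ha]
      have := pow_eq_pow_of_modEq' ζ h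
      rwa [pow_one] at this
    apply hζK
    have hnatfix : ∀ i : ℕ, (s ^ i) ζ = ζ := by
      intro i
      induction i with
      | zero => simp
      | succ i ih => rw [pow_succ', AlgEquiv.mul_apply, ih, hfix]
    have hfixall : ∀ g : L ≃ₐ[K] L, g ζ = ζ := by
      intro g
      obtain ⟨z, hz⟩ := hs g
      rw [← hz]
      beta_reduce
      rcases z with i | i
      · rw [Int.ofNat_eq_coe, zpow_natCast]; exact hnatfix i
      · rw [zpow_negSucc]
        have h1 := hnatfix (i + 1)
        have h2 := congrArg (fun x => (s ^ (i + 1))⁻¹ x) h1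
        beta_reduce at h2
        rw [← AlgEquiv.mul_apply, inv_mul_cancel, AlgEquiv.one_apply] at h2
        exact h2.symm
    have hmem : ζ ∈ (⊥ : IntermediateField K L) := by
      rw [← IsGalois.fixedField_fixingSubgroup (⊥ : IntermediateField K L),
        IntermediateField.fixingSubgroup_bot]
      exact fun g => hfixall g.1
    rw [IntermediateField.mem_bot] at hmem
    obtain ⟨y, hy⟩ := hmem
    exact ⟨y, hy⟩
  -- norm condition
  obtain ⟨kξ, hkξ⟩ := hgen ξ hξ
  have hprod : ∏ σ : L ≃ₐ[K] L, σ ξ = 1 := by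
    rw [← Algebra.norm_eq_prod_automorphisms, hnorm, map_one]
  have hbij : Function.Bijective (fun i : Fin p => s ^ (i : ℕ)) := by
    rw [Fintype.bijective_iff_injective_and_card]
    refine ⟨fun i j hij => ?_, by simp [hcard]⟩
    have hi : (i : ℕ) ∈ Set.Iio (orderOf s) := by rw [hsord]; exact i.isLt
    have hj : (j : ℕ) ∈ Set.Iio (orderOf s) := by rw [hsord]; exact j.isLt
    exact Fin.ext (pow_injOn_Iio_orderOf hi hj hij)
  have hprod2 : ζ ^ (∑ i ∈ range p, kξ * a ^ i) = 1 := by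
    have e1 : ∏ i : Fin p, (s ^ (i : ℕ)) ξ = ∏ σ : L ≃ₐ[K] L, σ ξ :=
      Fintype.prod_bijective _ hbij _ _ (fun i => rfl)
    have e2 : ∏ i : Fin p, (s ^ (i : ℕ)) ξ = ζ ^ (∑ i ∈ range p, kξ * a ^ i) := by
      have e3 : ∀ i : Fin p, (s ^ (i : ℕ)) ξ = ζ ^ (kξ * a ^ (i : ℕ)) := by
        intro i
        rw [hkξ, map_pow, hiter, ← pow_mul, mul_comm]
      rw [Fintype.prod_congr _ _ e3, Finset.prod_pow_eq_pow_sum,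
        ← Fin.sum_univ_eq_sum_range]
    rw [← e2, e1, hprod]
  have hdvd3 : p ^ n ∣ kξ * ∑ i ∈ range p, a ^ i := by
    rw [← hN]
    have := orderOf_dvd_of_pow_eq_one hprod2
    rwa [← Finset.mul_sum] at this
  -- integer versions
  have h1I : (p:ℤ)^n ∣ (a:ℤ)^p - 1 := by
    have := (Nat.modEq_iff_dvd).1 hmod1
    push_cast at this ⊢
    rw [← neg_sub]
    exact dvd_neg.2 this
  have h2I : ¬ (p:ℤ)^n ∣ (a:ℤ) - 1 := by
    intro h
    apply hmodne
    rw [Nat.modEq_iff_dvd]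
    push_cast
    rwa [← dvd_neg, neg_sub] at h
  have h3I : (p:ℤ)^n ∣ (kξ:ℤ) * ∑ i ∈ range p, (a:ℤ)^i := by
    have := Int.natCast_dvd_natCast.2 hdvd3
    push_cast at this
    exact this
  obtain ⟨j, hj⟩ := arith_key p hp hodd n (a:ℤ) (kξ:ℤ) h1I h2I h3I
  -- choose natural representative
  have hM0 : (0:ℤ) < (p:ℤ)^n := by exact_mod_cast pow_pos hp.pos n
  set j' : ℕ := (j % (p:ℤ)^n).toNat with hj'
  have hj'c : (j' : ℤ) = j % (p:ℤ)^n := Int.toNat_of_nonneg (Int.emod_nonneg j hM0.ne')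
  have hdiff : (p:ℤ)^n ∣ (j' : ℤ) - j := by
    rw [hj'c]
    exact (dvd_sub_comm).1 ((Int.mod_modEq j ((p:ℤ)^n)).dvd)
  refine ⟨ζ ^ j', ⟨m, by rw [← pow_mul, mul_comm, pow_mul, hm, one_pow]⟩, ?_⟩
  have hsη : s (ζ ^ j') = ζ ^ (a * j') := by rw [map_pow, ha, ← pow_mul]
  rw [hkξ, hsη, eq_mul_inv_iff_mul_eq₀ (pow_ne_zero _ hζ0), ← pow_add]
  refine pow_eq_pow_of_modEq' ζ ?_
  rw [hN, Nat.modEq_iff_dvd]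
  push_cast
  have key : (p:ℤ)^n ∣ (kξ:ℤ) + (j':ℤ) * ((a:ℤ) - 1) := by
    have := dvd_add hj (hdiff.mul_right ((a:ℤ) - 1))
    rw [show (kξ:ℤ) + (j':ℤ) * ((a:ℤ) - 1) = (kξ:ℤ) + j * ((a:ℤ) - 1) + ((j':ℤ) - j) * ((a:ℤ) - 1) by ring]
    exact this
  have heq : (j':ℤ) - ((kξ:ℤ) + (a:ℤ) * (j':ℤ)) = -((kξ:ℤ) + (j':ℤ) * ((a:ℤ) - 1)) := by
    ring
  rw [heq]
  exact dvd_neg.2 key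
end
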